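/- For any positive integers n and s with s ≥ 1, n ≥ 1, there are (up to isomorphism) only finitely many finite groups G possessing a normal subgroup N with index |G:N| = n such that N contains exactly s non-central G-conjugacy classes. -/

import Mathlib

universe u

/-! ### A Landau-type bound for sums of unit fractions -/

/-- A bound for the denominators appearing in a representation of `r` as a
sum of `k` unit fractions. -/
noncomputable def landauB : ℕ → ℚ → ℕ
  | 0, _ => 1
  | (k+1), r => (Finset.Icc 1 ⌈((k:ℚ)+1)/r⌉₊).sup
      (fun v => max v (landauB k (r - (v:ℚ)⁻¹)))

theorem landau_bound : ∀ (k : ℕ) (r : ℚ) (m : Multiset ℕ),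
    Multiset.card m = k → (∀ x ∈ m, 1 ≤ x) →
    (m.map (fun x : ℕ => ((x : ℚ))⁻¹)).sum = r → ∀ x ∈ m, x ≤ landauB k r := by
  intro k
  induction k with
  | zero =>
    intro r m hc _ _ x hx
    rw [Multiset.card_eq_zero] at hc; subst hc; simp at hx
  | succ k ih =>
    intro r m hc h1 hsum x hx
    have hne : m ≠ 0 := by rintro rfl; simp at hc
    have htne : m.toFinset.Nonempty := by
      rw [Multiset.toFinset_nonempty]; exact hne
    set v := m.toFinset.min' htne with hv
    have hvm : v ∈ m := Multiset.mem_toFinset.mp (m.toFinset.min'_mem htne)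
    have hvmin : ∀ y ∈ m, v ≤ y := fun y hy =>
      m.toFinset.min'_le y (Multiset.mem_toFinset.mpr hy)
    have hv1 : 1 ≤ v := h1 v hvm
    have hv0 : (0:ℚ) < (v:ℚ) := by exact_mod_cast hv1
    set m' := m.erase v with hm'
    have hm : m = v ::ₘ m' := (Multiset.cons_erase hvm).symm
    have hc' : Multiset.card m' = k := by
      have := congrArg Multiset.card hm
      simp at this; omega
    have hsum' : (m'.map (fun x : ℕ => ((x : ℚ))⁻¹)).sum = r - (v:ℚ)⁻¹ := by
      rw [hm, Multiset.map_cons, Multiset.sum_cons] at hsum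
      linarith
    have hrest : (0:ℚ) ≤ (m'.map (fun x : ℕ => ((x : ℚ))⁻¹)).sum := by
      apply Multiset.sum_nonneg
      intro z hz
      obtain ⟨y, hy, rfl⟩ := Multiset.mem_map.mp hz
      positivity
    have hrpos : 0 < r := by
      have : (0:ℚ) < (v:ℚ)⁻¹ := by positivity
      linarith [hsum', this, hrest]
    have hbound : r ≤ ((k:ℚ)+1) * (v:ℚ)⁻¹ := by
      rw [← hsum]
      have := Multiset.sum_le_card_nsmul (m.map (fun x : ℕ => ((x : ℚ))⁻¹)) ((v:ℚ)⁻¹) ?_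
      · simpa [hc, nsmul_eq_mul, add_comm] using this
      · intro z hz
        obtain ⟨y, hy, rfl⟩ := Multiset.mem_map.mp hz
        have hy1 : (0:ℚ) < (y:ℚ) := by exact_mod_cast h1 y hy
        rw [inv_le_inv₀ hy1 hv0]
        exact_mod_cast hvmin y hy
    have hvle : (v:ℚ) ≤ ((k:ℚ)+1) / r := by
      rw [le_div_iff₀ hrpos]
      have h2 : r * v ≤ ((k:ℚ)+1) := by
        calc r * v ≤ (((k:ℚ)+1) * (v:ℚ)⁻¹) * v := by
              exact mul_le_mul_of_nonneg_right hbound (le_of_lt hv0)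
          _ = (k:ℚ)+1 := by field_simp
      linarith [h2, mul_comm r (v:ℚ)]
    have hvceil : v ≤ ⌈((k:ℚ)+1)/r⌉₊ := by
      calc v = ⌈((v:ℚ))⌉₊ := (Nat.ceil_natCast v).symm
        _ ≤ ⌈((k:ℚ)+1)/r⌉₊ := Nat.ceil_le_ceil hvle
    have hvIcc : v ∈ Finset.Icc 1 ⌈((k:ℚ)+1)/r⌉₊ := Finset.mem_Icc.mpr ⟨hv1, hvceil⟩
    have hsup : max v (landauB k (r - (v:ℚ)⁻¹)) ≤ landauB (k+1) r := by
      rw [landauB]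
      exact Finset.le_sup (f := fun v => max v (landauB k (r - (v:ℚ)⁻¹))) hvIcc
    rw [hm, Multiset.mem_cons] at hx
    rcases hx with rfl | hx
    · exact le_trans (le_max_left _ _) hsup
    · exact le_trans (le_trans (ih (r - (v:ℚ)⁻¹) m' hc'
        (fun y hy => h1 y (Multiset.mem_of_mem_erase hy)) hsum' x hx)
        (le_max_right _ _)) hsup

/-! ### Group-theoretic auxiliary lemmas -/

theorem conjugatesOf_eq_orbit {G : Type*} [Group G] (x : G) :
    conjugatesOf x = MulAction.orbit (ConjAct G) x := by
  rw [ConjAct.orbit_eq_carrier_conjClasses]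
  ext y
  rw [ConjClasses.mem_carrier_iff_mk_eq, ConjClasses.mk_eq_mk_iff_isConj]
  exact isConj_comm

theorem conj_class_card_mul {G : Type*} [Group G] [Finite G] (x : G) :
    (conjugatesOf x).ncard * Nat.card (MulAction.stabilizer (ConjAct G) x) = Nat.card G := by
  have h1 : (conjugatesOf x).ncard = (MulAction.stabilizer (ConjAct G) x).index := by
    rw [← Nat.card_coe_set_eq, conjugatesOf_eq_orbit,
      Nat.card_congr (MulAction.orbitEquivQuotientStabilizer (ConjAct G) x),
      Subgroup.index_eq_card]
  rw [h1, Subgroup.index_mul_card]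
  exact Nat.card_congr ConjAct.ofConjAct.toEquiv

theorem center_card_le_stabilizer {G : Type*} [Group G] [Finite G] (N : Subgroup G) (x : G) :
    Nat.card (Subgroup.center G ⊓ N : Subgroup G) ≤
      Nat.card (MulAction.stabilizer (ConjAct G) x) := by
  have : Finite (ConjAct G) := Finite.of_equiv G ConjAct.toConjAct.toEquiv
  apply Nat.card_le_card_of_injective
    (fun (z : (Subgroup.center G ⊓ N : Subgroup G)) => (⟨ConjAct.toConjAct (z : G), by
      rw [MulAction.mem_stabilizer_iff, ConjAct.toConjAct_smul]
      have hz : (z : G) ∈ Subgroup.center G := z.2.1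
      rw [Subgroup.mem_center_iff] at hz
      rw [← hz x, mul_inv_cancel_right]⟩ : MulAction.stabilizer (ConjAct G) x))
  intro a b hab
  have h2 := congrArg Subtype.val hab
  exact Subtype.ext (ConjAct.toConjAct.injective h2)

/-! ### Finitely many groups of bounded order -/

/-- A wrapper around `Fin m` carrying no algebraic instances. -/
structure GWrap (m : ℕ) : Type where
  val : Fin m

theorem GWrap.val_injective (m : ℕ) : Function.Injective (GWrap.val (m := m)) := by
  rintro ⟨a⟩ ⟨b⟩ h; simpa using h

instance (m : ℕ) : Finite (GWrap m) := Finite.of_injective _ (GWrap.val_injective m)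

/-- The equivalence `GWrap m ≃ Fin m`. -/
def GWrap.equivFin (m : ℕ) : GWrap m ≃ Fin m :=
  ⟨GWrap.val, GWrap.mk, fun _ => rfl, fun _ => rfl⟩

/-- Up to isomorphism, there are only finitely many groups of order at most `B`. -/
theorem bounded_card_groups (B : ℕ) :
    ∃ (ι : Type) (_ : Finite ι) (H : ι → GrpCat.{u}),
      ∀ (G : Type) [Group G] [Finite G], Nat.card G ≤ B → ∃ i, Nonempty (G ≃* H i) := by
  have hfin : ∀ m : ℕ, Finite (Group (GWrap m)) := fun m =>
    Finite.of_injective (fun g : Group (GWrap m) => g.mul) (fun g₁ g₂ h => Group.ext h)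
  refine ⟨(m : Fin (B+1)) × Group (GWrap m), by exact Finite.instSigma,
    fun i => letI := i.2; GrpCat.of (ULift.{u} (GWrap i.1)), ?_⟩
  intro G _ _ hG
  have hm : Nat.card G < B + 1 := Nat.lt_succ_of_le hG
  let e : G ≃ GWrap (Nat.card G) := (Finite.equivFin G).trans (GWrap.equivFin _).symm
  letI gi : Group (GWrap (Nat.card G)) := e.symm.group
  exact ⟨⟨⟨Nat.card G, hm⟩, gi⟩,
    ⟨((Equiv.mulEquiv e.symm).symm : G ≃* _).trans MulEquiv.ulift.symm⟩⟩

/-! ### Main theorem -/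

set_option maxHeartbeats 2000000 in
/-- For any positive integers `n` and `s`, there are (up to isomorphism)
only finitely many finite groups `G` possessing a normal subgroup `N` of index `n`
containing exactly `s` non-central `G`-conjugacy classes. -/
theorem finitely_many_groups_with_normal_subgroup_few_noncentral_classes
    (n s : ℕ) (hn : 1 ≤ n) (hs : 1 ≤ s) :
    ∃ (ι : Type) (_ : Finite ι) (H : ι → GrpCat),
      ∀ (G : Type) [Group G] [Finite G] (N : Subgroup G), N.Normal →
        N.index = n →
        {C : Set G | ∃ x : G, x ∈ N ∧ x ∉ Subgroup.center G ∧ C = conjugatesOf x}.ncard = s →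
        ∃ i, Nonempty (G ≃* H i) := by
  classical
  set B := landauB (s+1) ((n:ℚ))⁻¹ with hB
  obtain ⟨ι, hι, H, hH⟩ := bounded_card_groups (B * B)
  refine ⟨ι, hι, H, ?_⟩
  intro G _ _ N hN hidx hS
  refine hH G ?_
  -- It suffices to bound the order of `G` by `B * B`.
  cases nonempty_fintype G
  set Z : Subgroup G := Subgroup.center G ⊓ N with hZ
  set S : Set (Set G) :=
    {C : Set G | ∃ x : G, x ∈ N ∧ x ∉ Subgroup.center G ∧ C = conjugatesOf x} with hSdef
  have hSfin : S.Finite := Set.toFinite S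
  set T : Finset (Set G) := hSfin.toFinset with hT
  have hTcard : T.card = s := by rw [← hS, hT, Set.ncard_eq_toFinset_card S hSfin]
  have hmemT : ∀ C ∈ T, ∃ x : G, x ∈ N ∧ x ∉ Subgroup.center G ∧ C = conjugatesOf x := by
    intro C hC
    rwa [hT, Set.Finite.mem_toFinset] at hC
  -- the partition of `N` into central elements and the noncentral classes
  have key : (N : Set G).toFinset =
      ((Z : Set G)).toFinset ∪ T.biUnion (fun C => C.toFinset) := by
    ext y
    simp only [Set.mem_toFinset, Finset.mem_union, Finset.mem_biUnion]
    constructor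
    · intro hy
      by_cases hyc : y ∈ Subgroup.center G
      · exact Or.inl (Subgroup.mem_inf.mpr ⟨hyc, hy⟩)
      · refine Or.inr ⟨conjugatesOf y, ?_, mem_conjugatesOf_self⟩
        rw [hT, Set.Finite.mem_toFinset]
        exact ⟨y, hy, hyc, rfl⟩
    · rintro (hy | ⟨C, hC, hyC⟩)
      · exact (Subgroup.mem_inf.mp hy).2
      · obtain ⟨x, hxN, hxc, rfl⟩ := hmemT C hC
        obtain ⟨g, hg⟩ := isConj_iff.mp hyC
        exact hg ▸ hN.conj_mem x hxN g
  have hdisj1 : Disjoint ((Z : Set G)).toFinset (T.biUnion (fun C => C.toFinset)) := by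
    rw [Finset.disjoint_left]
    intro y hy hy2
    rw [Set.mem_toFinset] at hy
    obtain ⟨C, hC, hyC⟩ := Finset.mem_biUnion.mp hy2
    rw [Set.mem_toFinset] at hyC
    obtain ⟨x, hxN, hxc, rfl⟩ := hmemT C hC
    obtain ⟨g, hg⟩ := isConj_iff.mp hyC
    apply hxc
    have hyc : y ∈ Subgroup.center G := (Subgroup.mem_inf.mp hy).1
    have hx : x = g⁻¹ * y * g := by rw [← hg]; group
    have h2 : g⁻¹ * y * g = y := by
      rw [Subgroup.mem_center_iff.mp hyc g⁻¹]; group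
    rw [hx, h2]; exact hyc
  have hdisj2 : ∀ C ∈ T, ∀ C' ∈ T, C ≠ C' → Disjoint C.toFinset C'.toFinset := by
    intro C hC C' hC' hne
    rw [Finset.disjoint_left]
    intro y hy hy'
    rw [Set.mem_toFinset] at hy hy'
    obtain ⟨x, _, _, rfl⟩ := hmemT C hC
    obtain ⟨x', _, _, rfl⟩ := hmemT C' hC'
    exact hne (((hy : IsConj x y).trans (hy' : IsConj x' y).symm).conjugatesOf_eq)
  have hcardN : Nat.card N = Nat.card Z + ∑ C ∈ T, C.ncard := by
    have h1 : Nat.card N = (N : Set G).toFinset.card := by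
      rw [← Set.ncard_eq_toFinset_card', ← Nat.card_coe_set_eq]
      rfl
    have h2 : Nat.card Z = ((Z : Set G)).toFinset.card := by
      rw [← Set.ncard_eq_toFinset_card', ← Nat.card_coe_set_eq]
      rfl
    rw [h1, key, Finset.card_union_of_disjoint hdisj1, Finset.card_biUnion hdisj2, ← h2]
    congr 1
    exact Finset.sum_congr rfl fun C _ => (Set.ncard_eq_toFinset_card' C).symm
  -- numerics
  set cg : ℕ := Nat.card G with hcg
  have hcg0 : 0 < cg := Nat.card_pos
  set q : ℕ := Z.index with hq
  set c : ℕ := Nat.card Z with hc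
  have hqc : q * c = cg := Z.index_mul_card
  have hq0 : q ≠ 0 := Subgroup.index_ne_zero_of_finite
  have hc0 : c ≠ 0 := Nat.card_pos.ne'
  have hnN : n * Nat.card N = cg := by rw [← hidx]; exact N.index_mul_card
  set d : Set G → ℕ := fun C => cg / C.ncard with hd
  have hCfacts : ∀ C ∈ T, C.ncard * d C = cg ∧ 1 ≤ d C ∧ c ≤ d C := by
    intro C hC
    obtain ⟨x, hxN, hxc, rfl⟩ := hmemT C hC
    have hmul := conj_class_card_mul x
    have hnc0 : 0 < (conjugatesOf x).ncard := by
      rw [Set.ncard_pos (Set.toFinite _)]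
      exact ⟨x, mem_conjugatesOf_self⟩
    have hdval : d (conjugatesOf x) = Nat.card (MulAction.stabilizer (ConjAct G) x) := by
      rw [hd]
      exact Nat.div_eq_of_eq_mul_left hnc0 (by rw [mul_comm]; exact hmul.symm)
    refine ⟨?_, ?_, ?_⟩
    · rw [hdval]; exact hmul
    · rw [hdval]; exact Nat.one_le_iff_ne_zero.mpr (Nat.card_pos).ne'
    · rw [hdval, hc, hZ]; exact center_card_le_stabilizer N x
  -- the multiset of denominators
  set mden : Multiset ℕ := q ::ₘ T.val.map d with hmden
  have hmcard : Multiset.card mden = s + 1 := by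
    rw [hmden, Multiset.card_cons, Multiset.card_map]
    rw [show (Multiset.card T.val) = T.card from rfl, hTcard]
  have hm1 : ∀ x ∈ mden, 1 ≤ x := by
    intro x hx
    rw [hmden, Multiset.mem_cons] at hx
    rcases hx with rfl | hx
    · exact Nat.one_le_iff_ne_zero.mpr hq0
    · obtain ⟨C, hC, rfl⟩ := Multiset.mem_map.mp hx
      exact (hCfacts C hC).2.1
  have hcgQ : ((cg : ℚ)) ≠ 0 := by exact_mod_cast hcg0.ne'
  have hmsum : (mden.map (fun x : ℕ => ((x : ℚ))⁻¹)).sum = ((n:ℚ))⁻¹ := by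
    rw [hmden, Multiset.map_cons, Multiset.sum_cons, Multiset.map_map]
    have hqinv : ((q : ℚ))⁻¹ = (c : ℚ) / (cg : ℚ) := by
      have hcast : (cg : ℚ) = (q : ℚ) * (c : ℚ) := by exact_mod_cast hqc.symm
      rw [hcast]
      have hq0' : ((q:ℚ)) ≠ 0 := by exact_mod_cast hq0
      have hc0' : ((c:ℚ)) ≠ 0 := by exact_mod_cast hc0
      field_simp
    have hterm : ∀ C ∈ T, ((d C : ℚ))⁻¹ = (C.ncard : ℚ) / (cg : ℚ) := by
      intro C hC
      obtain ⟨h1, h2, _⟩ := hCfacts C hC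
      have hcast : (cg : ℚ) = (C.ncard : ℚ) * (d C : ℚ) := by exact_mod_cast h1.symm
      have hd0' : ((d C : ℚ)) ≠ 0 := by
        have : d C ≠ 0 := by omega
        exact_mod_cast this
      have hn0' : ((C.ncard : ℚ)) ≠ 0 := by
        have : C.ncard ≠ 0 := by
          intro h; rw [h, Nat.zero_mul] at h1; omega
        exact_mod_cast this
      rw [hcast]
      field_simp
    have hsum2 : (T.val.map (fun C => ((d C : ℚ))⁻¹)).sum = ∑ C ∈ T, ((d C : ℚ))⁻¹ := rfl
    have hcomp : (T.val.map ((fun x : ℕ => ((x : ℚ))⁻¹) ∘ d)).sum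
        = ∑ C ∈ T, ((d C : ℚ))⁻¹ := rfl
    rw [hcomp, hqinv, Finset.sum_congr rfl hterm, ← Finset.sum_div, ← add_div]
    have hcast2 : (c : ℚ) + ∑ C ∈ T, (C.ncard : ℚ) = ((Nat.card N : ℕ) : ℚ) := by
      rw [hcardN]
      push_cast
      ring
    rw [hcast2]
    have hcast3 : (cg : ℚ) = (n : ℚ) * ((Nat.card N : ℕ) : ℚ) := by exact_mod_cast hnN.symm
    have hn0' : ((n:ℚ)) ≠ 0 := by
      have : n ≠ 0 := by omega
      exact_mod_cast this
    have hN0' : (((Nat.card N : ℕ)) : ℚ) ≠ 0 := by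
      have : Nat.card N ≠ 0 := Nat.card_pos.ne'
      exact_mod_cast this
    rw [hcast3]
    field_simp
  -- apply the Landau bound
  have hland := landau_bound (s+1) ((n:ℚ))⁻¹ mden hmcard hm1 hmsum
  have hqB : q ≤ B := hland q (Multiset.mem_cons_self q _)
  obtain ⟨C₀, hC₀⟩ : T.Nonempty := Finset.card_pos.mp (by omega)
  have hdB : d C₀ ≤ B := hland (d C₀)
    (by rw [hmden]; exact Multiset.mem_cons_of_mem (Multiset.mem_map_of_mem d hC₀))
  have hcB : c ≤ B := le_trans (hCfacts C₀ hC₀).2.2 hdB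
  calc Nat.card G = q * c := hqc.symm
    _ ≤ B * B := Nat.mul_le_mul hqB hcB
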